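/- Let p, q, z ∈ ℂ^{n+1} be nonzero with 0 < d(p,q) < π/2 and 0 < d(p,z) < π/2. Then for all sufficiently small t > 0 the point γ_t(p,z) satisfies γ_t(p,z)·ᾱ ≠ 0 and γ_t(p,z)·β̄ ≠ 0, and lim_{t → 0⁺} μ_{p,q}(γ_t(p,z))/t² = (1/2)·(1 − Re( (γ₀'(p,z)·conj(γ₀'(p,q)))² )). -/

import Mathlib

noncomputable section

/-- Hermitian product `w·z̄ = Σᵢ wⁱ·conj(zⁱ)` on `ℂ^m`. -/
def herm {m : ℕ} (w z : EuclideanSpace ℂ (Fin m)) : ℂ :=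
  ∑ i, w i * (starRingEnd ℂ) (z i)

/-- Fubini–Study distance between (the projective classes of) `p` and `q`. -/
def fsDist {m : ℕ} (p q : EuclideanSpace ℂ (Fin m)) : ℝ :=
  Real.arccos (‖herm p q‖ / (‖p‖ * ‖q‖))

/-- Initial velocity `γ₀'(p,q)` of the geodesic from `[p]` to `[q]`. -/
def gammaDir {m : ℕ} (p q : EuclideanSpace ℂ (Fin m)) : EuclideanSpace ℂ (Fin m) :=
  (Real.cot (fsDist p q) : ℂ) • (((‖p‖ : ℂ) / herm q p) • q - (‖p‖ : ℂ)⁻¹ • p)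

/-- The geodesic `γ_t(p,q) = cos t·(p/|p|) + sin t·γ₀'(p,q)`. -/
def geo {m : ℕ} (t : ℝ) (p q : EuclideanSpace ℂ (Fin m)) : EuclideanSpace ℂ (Fin m) :=
  (Real.cos t : ℂ) • ((‖p‖ : ℂ)⁻¹ • p) + (Real.sin t : ℂ) • gammaDir p q

/-- The velocity `γ_t'(p,q) = −sin t·(p/|p|) + cos t·γ₀'(p,q)`. -/
def geoVel {m : ℕ} (t : ℝ) (p q : EuclideanSpace ℂ (Fin m)) : EuclideanSpace ℂ (Fin m) :=
  (-(Real.sin t) : ℂ) • ((‖p‖ : ℂ)⁻¹ • p) + (Real.cos t : ℂ) • gammaDir p q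

/-- `α = (p/|p| + i·γ₀'(p,q))/√2`. -/
def alphaV {m : ℕ} (p q : EuclideanSpace ℂ (Fin m)) : EuclideanSpace ℂ (Fin m) :=
  ((Real.sqrt 2 : ℂ))⁻¹ • ((‖p‖ : ℂ)⁻¹ • p + Complex.I • gammaDir p q)

/-- `β = (p/|p| − i·γ₀'(p,q))/√2`. -/
def betaV {m : ℕ} (p q : EuclideanSpace ℂ (Fin m)) : EuclideanSpace ℂ (Fin m) :=
  ((Real.sqrt 2 : ℂ))⁻¹ • ((‖p‖ : ℂ)⁻¹ • p - Complex.I • gammaDir p q)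

/-- `μ_{p,q}(z) = −(1/2)·log(2·|z·ᾱ|·|z·β̄|/|z|²)`. -/
def muW {m : ℕ} (p q z : EuclideanSpace ℂ (Fin m)) : ℝ :=
  -(1 / 2 : ℝ) * Real.log (2 * ‖herm z (alphaV p q)‖ *
    ‖herm z (betaV p q)‖ / ‖z‖ ^ 2)

open scoped InnerProductSpace ComplexConjugate

lemma herm_eq_inner {m : ℕ} (w z : EuclideanSpace ℂ (Fin m)) :
    herm w z = ⟪z, w⟫_ℂ := by
  simp only [herm, PiLp.inner_apply, RCLike.inner_apply]

lemma key_props {m : ℕ} (p q : EuclideanSpace ℂ (Fin m))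
    (hp : p ≠ 0) (hq : q ≠ 0)
    (hd0 : 0 < fsDist p q) (hd2 : fsDist p q < Real.pi / 2) :
    ⟪p, gammaDir p q⟫_ℂ = 0 ∧ ⟪gammaDir p q, gammaDir p q⟫_ℂ = 1 := by
  have hnp : (‖p‖ : ℝ) ≠ 0 := norm_ne_zero_iff.mpr hp
  have hnq : (‖q‖ : ℝ) ≠ 0 := norm_ne_zero_iff.mpr hq
  set x : ℝ := ‖herm p q‖ / (‖p‖ * ‖q‖) with hx
  have habs : ‖herm p q‖ = ‖⟪q, p⟫_ℂ‖ := by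
    rw [← herm_eq_inner]
  have hx1 : x ≤ 1 := by
    rw [hx, div_le_one (by positivity)]
    rw [habs]
    calc ‖⟪q, p⟫_ℂ‖ ≤ ‖q‖ * ‖p‖ := norm_inner_le_norm q p
    _ = ‖p‖ * ‖q‖ := mul_comm _ _
  have hx0 : 0 ≤ x := by positivity
  have hcos : Real.cos (fsDist p q) = x := Real.cos_arccos (by linarith) hx1
  have hcospos : 0 < Real.cos (fsDist p q) :=
    Real.cos_pos_of_mem_Ioo ⟨by linarith [Real.pi_pos], hd2⟩
  have hsinpos : 0 < Real.sin (fsDist p q) :=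
    Real.sin_pos_of_pos_of_lt_pi hd0 (by linarith [Real.pi_pos])
  have hxpos : 0 < x := hcos ▸ hcospos
  have hkabs : 0 < ‖herm p q‖ := by
    by_contra h
    push_neg at h
    have : ‖herm p q‖ = 0 := le_antisymm h (norm_nonneg _)
    rw [hx, this] at hxpos; simp at hxpos
  have hk' : herm p q ≠ 0 := by
    intro h; rw [h] at hkabs; simp at hkabs
  set k : ℂ := herm q p with hkdef
  have hkconj : k = conj (herm p q) := by
    rw [hkdef, herm_eq_inner q p, herm_eq_inner p q, inner_conj_symm]
  have hk : k ≠ 0 := by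
    rw [hkconj]; exact fun h => hk' (by simpa using congrArg conj h)
  have hpq : ⟪p, q⟫_ℂ = k := (herm_eq_inner q p).symm
  have hqp : ⟪q, p⟫_ℂ = conj k := by rw [← inner_conj_symm, hpq]
  have hpp : ⟪p, p⟫_ℂ = (‖p‖ : ℂ) ^ 2 := inner_self_eq_norm_sq_to_K p
  have hqq : ⟪q, q⟫_ℂ = (‖q‖ : ℂ) ^ 2 := inner_self_eq_norm_sq_to_K q
  have hkk : k * conj k = ((‖herm p q‖ : ℝ) : ℂ) ^ 2 := by
    rw [hkconj, Complex.conj_conj, mul_comm, Complex.mul_conj, Complex.normSq_eq_norm_sq]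
    push_cast
    ring
  have hnpc : ((‖p‖ : ℝ) : ℂ) ≠ 0 := by exact_mod_cast hnp
  have hnqc : ((‖q‖ : ℝ) : ℂ) ≠ 0 := by exact_mod_cast hnq
  constructor
  · rw [gammaDir]
    simp only [inner_smul_right, inner_sub_right, hpq, hpp, ← hkdef]
    field_simp
    ring
  · rw [gammaDir]
    simp only [inner_smul_left, inner_smul_right, inner_sub_left, inner_sub_right,
      hpq, hqp, hpp, hqq, ← hkdef, map_div₀, map_inv₀, Complex.conj_ofReal]
    have hkc : conj k ≠ 0 := by simpa using hk
    have hxne : (x : ℂ) ≠ 0 := by exact_mod_cast ne_of_gt hxpos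
    have hsinne : ((Real.sin (fsDist p q) : ℝ) : ℂ) ≠ 0 := by
      exact_mod_cast ne_of_gt hsinpos
    have hcot : Real.cot (fsDist p q) = x / Real.sin (fsDist p q) := by
      rw [Real.cot_eq_cos_div_sin, hcos]
    have hsc : ((Real.sin (fsDist p q) : ℝ) : ℂ) ^ 2 = 1 - (x:ℂ) ^ 2 := by
      have h := Real.sin_sq_add_cos_sq (fsDist p q)
      rw [hcos] at h
      have : (Real.sin (fsDist p q))^2 = 1 - x^2 := by linarith
      exact_mod_cast congrArg Complex.ofReal this
    have hkk2 : k * conj k = (x:ℂ)^2 * (‖p‖:ℂ)^2 * (‖q‖:ℂ)^2 := by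
      rw [hkk]
      have : ‖herm p q‖ = x * (‖p‖ * ‖q‖) := by
        rw [hx]; field_simp
      rw [this]; push_cast; ring
    have hsinC : Complex.sin ((fsDist p q : ℝ) : ℂ) ≠ 0 := by
      rw [← Complex.ofReal_sin]; exact hsinne
    rw [hcot, Complex.ofReal_div]
    field_simp [hsinC]
    linear_combination (-((x:ℂ)^2 + ((Real.sin (fsDist p q) : ℝ):ℂ)^2)) * hkk2 + (-(x:ℂ)^2*(‖p‖:ℂ)^2*(‖q‖:ℂ)^2) * hsc

lemma herm_geo_alpha {m : ℕ} (p q z : EuclideanSpace ℂ (Fin m)) (hp : p ≠ 0)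
    (hpv : ⟪p, gammaDir p q⟫_ℂ = 0) (hpw : ⟪p, gammaDir p z⟫_ℂ = 0) (t : ℝ) :
    herm (geo t p z) (alphaV p q) =
      ((Real.sqrt 2 : ℝ) : ℂ)⁻¹ * ((Real.cos t : ℂ)
        - Complex.I * herm (gammaDir p z) (gammaDir p q) * (Real.sin t : ℂ)) := by
  have hnpc : ((‖p‖ : ℝ) : ℂ) ≠ 0 := by
    exact_mod_cast norm_ne_zero_iff.mpr hp
  have hvp : ⟪gammaDir p q, p⟫_ℂ = 0 := by rw [← inner_conj_symm, hpv]; simp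
  have hvw : ⟪gammaDir p q, gammaDir p z⟫_ℂ = herm (gammaDir p z) (gammaDir p q) :=
    (herm_eq_inner _ _).symm
  rw [herm_eq_inner, geo, alphaV]
  simp only [inner_add_left, inner_add_right, inner_smul_left, inner_smul_right,
    map_inv₀, Complex.conj_ofReal, Complex.conj_I, hvp, hpw, hvw,
    inner_self_eq_norm_sq_to_K]
  have hs2 : ((Real.sqrt 2 : ℝ) : ℂ) ≠ 0 := by
    exact_mod_cast (Real.sqrt_pos.mpr (by norm_num)).ne'
  field_simp [hnpc, hs2]
  simp only [RCLike.ofReal_eq_complex_ofReal]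
  ring

lemma herm_geo_beta {m : ℕ} (p q z : EuclideanSpace ℂ (Fin m)) (hp : p ≠ 0)
    (hpv : ⟪p, gammaDir p q⟫_ℂ = 0) (hpw : ⟪p, gammaDir p z⟫_ℂ = 0) (t : ℝ) :
    herm (geo t p z) (betaV p q) =
      ((Real.sqrt 2 : ℝ) : ℂ)⁻¹ * ((Real.cos t : ℂ)
        + Complex.I * herm (gammaDir p z) (gammaDir p q) * (Real.sin t : ℂ)) := by
  have hnpc : ((‖p‖ : ℝ) : ℂ) ≠ 0 := by
    exact_mod_cast norm_ne_zero_iff.mpr hp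
  have hvp : ⟪gammaDir p q, p⟫_ℂ = 0 := by rw [← inner_conj_symm, hpv]; simp
  have hvw : ⟪gammaDir p q, gammaDir p z⟫_ℂ = herm (gammaDir p z) (gammaDir p q) :=
    (herm_eq_inner _ _).symm
  rw [herm_eq_inner, geo, betaV]
  simp only [inner_sub_left, inner_add_right, inner_smul_left, inner_smul_right,
    map_inv₀, Complex.conj_ofReal, Complex.conj_I, hvp, hpw, hvw,
    inner_self_eq_norm_sq_to_K]
  have hs2 : ((Real.sqrt 2 : ℝ) : ℂ) ≠ 0 := by
    exact_mod_cast (Real.sqrt_pos.mpr (by norm_num)).ne'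
  field_simp [hnpc, hs2]
  simp only [RCLike.ofReal_eq_complex_ofReal]
  ring

lemma norm_geo {m : ℕ} (p z : EuclideanSpace ℂ (Fin m)) (hp : p ≠ 0)
    (hpw : ⟪p, gammaDir p z⟫_ℂ = 0) (hww : ⟪gammaDir p z, gammaDir p z⟫_ℂ = 1) (t : ℝ) :
    (‖geo t p z‖ : ℝ) ^ 2 = 1 := by
  have hnpc : ((‖p‖ : ℝ) : ℂ) ≠ 0 := by
    exact_mod_cast norm_ne_zero_iff.mpr hp
  have hwp : ⟪gammaDir p z, p⟫_ℂ = 0 := by rw [← inner_conj_symm, hpw]; simp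
  have hpp := inner_self_eq_norm_sq_to_K (𝕜 := ℂ) p
  have key : ⟪geo t p z, geo t p z⟫_ℂ = 1 := by
    rw [geo]
    simp only [inner_add_left, inner_add_right, inner_smul_left, inner_smul_right,
      map_inv₀, Complex.conj_ofReal, hpw, hwp, hww, hpp]
    have hsc : Complex.cos (t:ℂ)^2 + Complex.sin (t:ℂ)^2 = 1 :=
      Complex.cos_sq_add_sin_sq _
    field_simp
    rw [← Complex.ofReal_cos, ← Complex.ofReal_sin] at hsc
    linear_combination ((‖p‖:ℂ))^2 * hsc
  have h1 := inner_self_eq_norm_sq_to_K (𝕜 := ℂ) (geo t p z)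
  rw [key] at h1
  have h2 : ((‖geo t p z‖^2 : ℝ) : ℂ) = ((1:ℝ):ℂ) := by push_cast; exact h1.symm
  exact_mod_cast h2

lemma muW_geo {m : ℕ} (p q z : EuclideanSpace ℂ (Fin m)) (hp : p ≠ 0)
    (hpv : ⟪p, gammaDir p q⟫_ℂ = 0) (hpw : ⟪p, gammaDir p z⟫_ℂ = 0)
    (hww : ⟪gammaDir p z, gammaDir p z⟫_ℂ = 1) (t : ℝ) :
    muW p q (geo t p z) = -(1/4 : ℝ) * Real.log (Complex.normSq
      (1 + ((Real.sin t ^ 2 : ℝ) : ℂ) * ((herm (gammaDir p z) (gammaDir p q))^2 - 1))) := by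
  have hA := herm_geo_alpha p q z hp hpv hpw t
  have hB := herm_geo_beta p q z hp hpv hpw t
  have hNrm := norm_geo p z hp hpw hww t
  set a := herm (gammaDir p z) (gammaDir p q) with ha
  set X := (Real.cos t : ℂ) - Complex.I * a * (Real.sin t : ℂ) with hX
  set Y := (Real.cos t : ℂ) + Complex.I * a * (Real.sin t : ℂ) with hY
  have hXY : X * Y = 1 + ((Real.sin t ^ 2 : ℝ) : ℂ) * (a^2 - 1) := by
    have hc : ((Real.cos t : ℝ) : ℂ)^2 = 1 - ((Real.sin t : ℝ) : ℂ)^2 := by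
      have h' : (Real.cos t)^2 = 1 - (Real.sin t)^2 := by
        have := Real.sin_sq_add_cos_sq t; linarith
      exact_mod_cast congrArg Complex.ofReal h'
    rw [hX, hY, Complex.ofReal_pow]
    linear_combination hc + (-(a^2 * ((Real.sin t : ℝ):ℂ)^2)) * Complex.I_sq
  have h0 : Real.sqrt 2 ≠ 0 := by positivity
  have h2 : ‖(((Real.sqrt 2 : ℝ) : ℂ)⁻¹)‖ = (Real.sqrt 2)⁻¹ := by
    rw [norm_inv, Complex.norm_real, Real.norm_eq_abs, abs_of_nonneg (Real.sqrt_nonneg 2)]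
  have hss : Real.sqrt 2 * Real.sqrt 2 = 2 := Real.mul_self_sqrt (by norm_num)
  rw [muW, hA, hB, hNrm, norm_mul, norm_mul, h2]
  have e1 : 2 * ((Real.sqrt 2)⁻¹ * ‖X‖) * ((Real.sqrt 2)⁻¹ * ‖Y‖) / 1
      = ‖(1 + ((Real.sin t ^ 2 : ℝ) : ℂ) * (a^2 - 1))‖ := by
    rw [div_one, ← hXY, norm_mul]
    field_simp
    rw [Real.sq_sqrt (by norm_num : (0:ℝ) ≤ 2)]
  rw [e1, Complex.norm_def, Real.log_sqrt (Complex.normSq_nonneg _)]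
  ring

lemma normSq_eval (c : ℂ) (s : ℝ) :
    Complex.normSq (1 + (s:ℂ) * c) = 1 + 2 * c.re * s + Complex.normSq c * s^2 := by
  simp [Complex.normSq_apply, Complex.add_re, Complex.add_im, Complex.mul_re,
    Complex.mul_im, Complex.ofReal_re, Complex.ofReal_im]
  ring

lemma logNormSq_deriv (c : ℂ) :
    HasDerivAt (fun s : ℝ => Real.log (Complex.normSq (1 + (s:ℂ) * c))) (2 * c.re) 0 := by
  have hN : HasDerivAt (fun s : ℝ => 1 + 2 * c.re * s + Complex.normSq c * s^2)
      (2 * c.re) 0 := by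
    have h1 : HasDerivAt (fun s : ℝ => 1 + 2 * c.re * s) (2 * c.re) 0 := by
      simpa using ((hasDerivAt_id (0:ℝ)).const_mul (2 * c.re)).const_add 1
    have h2 : HasDerivAt (fun s : ℝ => Complex.normSq c * s^2) 0 0 := by
      simpa using (hasDerivAt_pow 2 (0:ℝ)).const_mul (Complex.normSq c)
    have h12 := h1.add h2
    rw [add_zero] at h12
    exact h12
  have h3 := hN.log (by norm_num)
  have h4 : (fun s : ℝ => Real.log (Complex.normSq (1 + (s:ℂ) * c)))
      = fun s : ℝ => Real.log (1 + 2 * c.re * s + Complex.normSq c * s^2) := by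
    funext s; rw [normSq_eval]
  rw [h4]
  convert h3 using 1
  norm_num

lemma slope_limit (c : ℂ) :
    Filter.Tendsto (fun s : ℝ => Real.log (Complex.normSq (1 + (s:ℂ) * c)) / s)
      (nhdsWithin 0 {(0:ℝ)}ᶜ) (nhds (2 * c.re)) := by
  have h := hasDerivAt_iff_tendsto_slope.mp (logNormSq_deriv c)
  refine h.congr fun s => ?_
  rw [slope_def_field]
  norm_num

lemma sin_sq_tendsto : Filter.Tendsto (fun t : ℝ => Real.sin t ^ 2)
    (nhdsWithin 0 (Set.Ioi 0)) (nhdsWithin 0 {(0:ℝ)}ᶜ) := by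
  rw [tendsto_nhdsWithin_iff]
  constructor
  · have : Filter.Tendsto (fun t : ℝ => Real.sin t ^ 2) (nhds 0) (nhds 0) := by
      have := (Real.continuous_sin.pow 2).tendsto 0
      rw [show ((Real.sin ^ 2) 0 : ℝ) = 0 by simp] at this
      exact this
    exact this.mono_left nhdsWithin_le_nhds
  · filter_upwards [Ioo_mem_nhdsGT_of_mem (Set.mem_Ico.mpr ⟨le_refl (0:ℝ), Real.pi_pos⟩)]
      with t ht
    have : Real.sin t ≠ 0 := ne_of_gt (Real.sin_pos_of_pos_of_lt_pi ht.1 ht.2)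
    simp [pow_ne_zero, this]

lemma sin_sq_div_sq : Filter.Tendsto (fun t : ℝ => Real.sin t ^ 2 / t ^ 2)
    (nhdsWithin 0 (Set.Ioi 0)) (nhds 1) := by
  have h := hasDerivAt_iff_tendsto_slope.mp (Real.hasDerivAt_sin 0)
  rw [Real.cos_zero] at h
  have h1 : Filter.Tendsto (fun t : ℝ => Real.sin t / t)
      (nhdsWithin 0 {(0:ℝ)}ᶜ) (nhds 1) := by
    refine h.congr fun t => ?_
    rw [slope_def_field]
    norm_num
  have h2 := h1.mono_left
    (nhdsWithin_mono 0 (fun x (hx : x ∈ Set.Ioi 0) => ne_of_gt hx))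
  have h3 := h2.mul h2
  rw [show (1:ℝ) * 1 = 1 by norm_num] at h3
  refine h3.congr fun t => ?_
  ring

theorem stmt11 {n : ℕ} (p q z : EuclideanSpace ℂ (Fin (n + 1)))
    (hp : p ≠ 0) (hq : q ≠ 0) (hz : z ≠ 0)
    (hd0 : 0 < fsDist p q) (hd2 : fsDist p q < Real.pi / 2)
    (hz0 : 0 < fsDist p z) (hz2 : fsDist p z < Real.pi / 2) :
    (∃ ε > 0, ∀ t : ℝ, 0 < t → t < ε →
        herm (geo t p z) (alphaV p q) ≠ 0 ∧ herm (geo t p z) (betaV p q) ≠ 0) ∧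
    Filter.Tendsto (fun t : ℝ => muW p q (geo t p z) / t ^ 2)
      (nhdsWithin 0 (Set.Ioi 0))
      (nhds ((1 / 2 : ℝ) * (1 - ((herm (gammaDir p z) (gammaDir p q)) ^ 2).re))) := by
  obtain ⟨hpv, hvv⟩ := key_props p q hp hq hd0 hd2
  obtain ⟨hpw, hww⟩ := key_props p z hp hz hz0 hz2
  have hs2 : ((Real.sqrt 2 : ℝ) : ℂ) ≠ 0 := by
    exact_mod_cast (Real.sqrt_pos.mpr (by norm_num)).ne'
  constructor
  · have hcA : Continuous (fun t : ℝ => (Real.cos t : ℂ)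
        - Complex.I * herm (gammaDir p z) (gammaDir p q) * (Real.sin t : ℂ)) := by
      fun_prop
    have hcB : Continuous (fun t : ℝ => (Real.cos t : ℂ)
        + Complex.I * herm (gammaDir p z) (gammaDir p q) * (Real.sin t : ℂ)) := by
      fun_prop
    have hevA : ∀ᶠ t in nhds (0:ℝ), ((Real.cos t : ℂ)
        - Complex.I * herm (gammaDir p z) (gammaDir p q) * (Real.sin t : ℂ)) ≠ 0 :=
      (hcA.continuousAt (x := 0)).eventually_ne (by simp)
    have hevB : ∀ᶠ t in nhds (0:ℝ), ((Real.cos t : ℂ)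
        + Complex.I * herm (gammaDir p z) (gammaDir p q) * (Real.sin t : ℂ)) ≠ 0 :=
      (hcB.continuousAt (x := 0)).eventually_ne (by simp)
    have hev := hevA.and hevB
    rw [Metric.eventually_nhds_iff] at hev
    obtain ⟨ε, hε, hball⟩ := hev
    refine ⟨ε, hε, fun t ht htε => ?_⟩
    have hdist : dist t (0:ℝ) < ε := by
      rw [Real.dist_eq, sub_zero, abs_of_pos ht]; exact htε
    obtain ⟨h1, h2⟩ := hball hdist
    rw [herm_geo_alpha p q z hp hpv hpw t, herm_geo_beta p q z hp hpv hpw t]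
    exact ⟨mul_ne_zero (inv_ne_zero hs2) h1, mul_ne_zero (inv_ne_zero hs2) h2⟩
  · set a := herm (gammaDir p z) (gammaDir p q) with ha
    set c : ℂ := a ^ 2 - 1 with hc
    have hlim := ((tendsto_const_nhds (x := (-(1/4):ℝ))).mul
      ((slope_limit c).comp sin_sq_tendsto)).mul sin_sq_div_sq
    have hval : (-(1/4):ℝ) * (2 * c.re) * 1 = (1/2) * (1 - (a ^ 2).re) := by
      rw [hc]; simp [Complex.sub_re, Complex.one_re]; ring
    rw [show ((1:ℝ)/2) * (1 - (a ^ 2).re) = (-(1/4):ℝ) * (2 * c.re) * 1 from hval.symm]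
    refine Filter.Tendsto.congr' ?_ hlim
    filter_upwards [Ioo_mem_nhdsGT_of_mem (Set.mem_Ico.mpr ⟨le_refl (0:ℝ), Real.pi_pos⟩)]
      with t htI
    have hts : Real.sin t ≠ 0 := ne_of_gt (Real.sin_pos_of_pos_of_lt_pi htI.1 htI.2)
    have hts2 : Real.sin t ^ 2 ≠ 0 := pow_ne_zero 2 hts
    have htne : t ≠ 0 := ne_of_gt htI.1
    have ht2 : t ^ 2 ≠ 0 := pow_ne_zero 2 htne
    rw [muW_geo p q z hp hpv hpw hww t, ← ha, ← hc]
    simp only [Function.comp]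
    field_simp
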